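/- Let ε > 0 and M_1 > 0. There exists a constant C = C(ε, M_1) > 0 such that for all measurable functions F, G : ℝ → [0, 1] with F(x) = G(x) = 0 for all x < 0, ∫_0^{M_1} ( F(s) − G(s) )² ds ≤ C ∫_ε^{2ε} ∫_0^{M_1} ( F(s) − F(s − e) − G(s) + G(s − e) )² ds de. -/

import Mathlib

open MeasureTheory Set

/-- Deterministic inequality propagating an L² bound on increments `F(s) − F(s−e)` to an
L² bound on `F − G`: there is a constant `C = C(ε, M₁) > 0` such that for all measurable
`F, G : ℝ → [0,1]` vanishing on `(-∞, 0)`,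
`∫_0^{M₁} (F − G)² ≤ C ∫_ε^{2ε} ∫_0^{M₁} (F(s) − F(s−e) − G(s) + G(s−e))² ds de`. -/
theorem increment_L2_bound (ε M₁ : ℝ) (hε : 0 < ε) (hM₁ : 0 < M₁) :
    ∃ C > (0 : ℝ), ∀ F G : ℝ → ℝ, Measurable F → Measurable G →
      (∀ x, F x ∈ Set.Icc (0 : ℝ) 1) → (∀ x, G x ∈ Set.Icc (0 : ℝ) 1) →
      (∀ x < (0 : ℝ), F x = 0) → (∀ x < (0 : ℝ), G x = 0) →
      (∫ s in Set.Ioc 0 M₁, (F s - G s) ^ 2) ≤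
        C * ∫ e in Set.Ioc ε (2 * ε),
              ∫ s in Set.Ioc 0 M₁, (F s - F (s - e) - G s + G (s - e)) ^ 2 := by
  classical
  set N : ℕ := ⌈M₁ / ε⌉₊ with hNdef
  have hNε : M₁ ≤ (N : ℝ) * ε := by
    have h1 : M₁ / ε ≤ (N : ℝ) := Nat.le_ceil _
    calc M₁ = (M₁ / ε) * ε := by field_simp
    _ ≤ (N : ℝ) * ε := by nlinarith
  have hNpos : (0:ℝ) < ((N:ℝ)+1)^2 := by positivity
  refine ⟨((N:ℝ)+1)^2 / ε, by positivity, ?_⟩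
  intro F G hF hG hF01 hG01 hF0 hG0
  set D : ℝ → ℝ := fun x => F x - G x with hDdef
  have hDmeas : Measurable D := hF.sub hG
  have hD0 : ∀ x < (0:ℝ), D x = 0 := fun x hx => by
    simp [hDdef, hF0 x hx, hG0 x hx]
  have hDbd : ∀ x, |D x| ≤ 1 := by
    intro x
    have h1 := hF01 x; have h2 := hG01 x
    rw [abs_le]; constructor <;> simp only [hDdef] <;>
      [linarith [h1.1, h2.2]; linarith [h1.2, h2.1]]
  set Δ : ℝ → ℝ → ℝ := fun e u => F u - F (u - e) - G u + G (u - e) with hΔdef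
  have hΔmeas : ∀ e, Measurable (Δ e) := fun e =>
    (((hF.sub (hF.comp (measurable_id.sub_const e))).sub hG).add
      (hG.comp (measurable_id.sub_const e)))
  have hΔeq : ∀ e u, Δ e u = D u - D (u - e) := by
    intro e u; simp only [hΔdef, hDdef]; ring
  have hΔbd : ∀ e u, Δ e u ^ 2 ≤ 4 := by
    intro e u
    have h1 := hDbd u; have h2 := hDbd (u - e)
    rw [abs_le] at h1 h2
    rw [hΔeq]
    nlinarith [h1.1, h1.2, h2.1, h2.2]
  have hΔ0 : ∀ e, 0 < e → ∀ u < (0:ℝ), Δ e u = 0 := by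
    intro e he u hu
    rw [hΔeq, hD0 u hu, hD0 (u - e) (by linarith), sub_zero]
  have hvol : (volume (Ioc (0:ℝ) M₁)) ≠ ⊤ := measure_Ioc_lt_top.ne
  -- integrability of Δ e ^ 2 on Ioc 0 M₁
  have hΔint : ∀ e, IntegrableOn (fun u => Δ e u ^ 2) (Ioc 0 M₁) volume := by
    intro e
    apply Measure.integrableOn_of_bounded hvol
      ((hΔmeas e).pow_const 2).aestronglyMeasurable (M := 4)
    filter_upwards with u
    rw [Real.norm_eq_abs, abs_of_nonneg (sq_nonneg _)]
    exact hΔbd e u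
  have hDint : IntegrableOn (fun s => D s ^ 2) (Ioc 0 M₁) volume := by
    apply Measure.integrableOn_of_bounded hvol
      (hDmeas.pow_const 2).aestronglyMeasurable (M := 1)
    filter_upwards with u
    rw [Real.norm_eq_abs, abs_of_nonneg (sq_nonneg _)]
    nlinarith [hDbd u, abs_nonneg (D u), sq_abs (D u)]
  -- key pointwise-in-e estimate
  have key : ∀ e ∈ Ioc ε (2 * ε),
      (∫ s in Ioc 0 M₁, D s ^ 2) ≤ ((N:ℝ)+1)^2 * ∫ s in Ioc 0 M₁, Δ e s ^ 2 := by
    intro e he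
    obtain ⟨he1, he2⟩ := he
    have he0 : 0 < e := hε.trans he1
    -- translated integrands are integrable
    have hshift : ∀ j : ℕ, IntegrableOn (fun s => Δ e (s - (j:ℝ) * e) ^ 2)
        (Ioc 0 M₁) volume := by
      intro j
      apply Measure.integrableOn_of_bounded hvol
        (((hΔmeas e).comp (measurable_id.sub_const _)).pow_const 2).aestronglyMeasurable
        (M := 4)
      filter_upwards with u
      rw [Real.norm_eq_abs, abs_of_nonneg (sq_nonneg _)]
      exact hΔbd e _
    -- pointwise telescoping bound
    have hpt : ∀ s ∈ Ioc (0:ℝ) M₁,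
        D s ^ 2 ≤ ((N:ℝ)+1) * ∑ j ∈ Finset.range (N+1), Δ e (s - (j:ℝ) * e) ^ 2 := by
      intro s hs
      have htel : D s = ∑ j ∈ Finset.range (N+1),
          (D (s - (j:ℝ) * e) - D (s - ((j:ℝ)+1) * e)) := by
        have := Finset.sum_range_sub' (fun j : ℕ => D (s - (j:ℝ) * e)) (N+1)
        have hend : D (s - ((N:ℝ)+1) * e) = 0 := by
          apply hD0
          have hN0 : (0:ℝ) ≤ (N:ℝ) := Nat.cast_nonneg _
          nlinarith [hs.2]
        rw [show (((N:ℕ)+1 : ℕ) : ℝ) = (N:ℝ)+1 by push_cast; ring] at this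
        simp only [Nat.cast_zero, zero_mul, sub_zero, hend] at this
        rw [← this]
        apply Finset.sum_congr rfl
        intro j _
        push_cast
        ring_nf
      calc D s ^ 2
          = (∑ j ∈ Finset.range (N+1),
              (D (s - (j:ℝ) * e) - D (s - ((j:ℝ)+1) * e))) ^ 2 := by rw [htel]
        _ ≤ ((Finset.range (N+1)).card : ℝ) * ∑ j ∈ Finset.range (N+1),
              (D (s - (j:ℝ) * e) - D (s - ((j:ℝ)+1) * e)) ^ 2 :=
            sq_sum_le_card_mul_sum_sq
        _ = ((N:ℝ)+1) * ∑ j ∈ Finset.range (N+1), Δ e (s - (j:ℝ) * e) ^ 2 := by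
            rw [Finset.card_range]
            push_cast
            congr 1
            apply Finset.sum_congr rfl
            intro j _
            rw [hΔeq]
            congr 2
            ring
    -- each shifted integral is bounded by the unshifted one
    have hshift_le : ∀ j : ℕ,
        (∫ s in Ioc 0 M₁, Δ e (s - (j:ℝ) * e) ^ 2) ≤ ∫ s in Ioc 0 M₁, Δ e s ^ 2 := by
      intro j
      set q : ℝ → ℝ := (Icc (0:ℝ) M₁).indicator (fun u => Δ e u ^ 2) with hqdef
      have hqint : Integrable q := by
        apply IntegrableOn.integrable_indicator _ measurableSet_Icc
        apply Measure.integrableOn_of_bounded measure_Icc_lt_top.ne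
          ((hΔmeas e).pow_const 2).aestronglyMeasurable (M := 4)
        filter_upwards with u
        rw [Real.norm_eq_abs, abs_of_nonneg (sq_nonneg _)]
        exact hΔbd e u
      have hq0 : ∀ u, 0 ≤ q u := fun u => by
        by_cases h : u ∈ Icc (0:ℝ) M₁ <;>
          simp [hqdef, indicator_of_mem, indicator_of_notMem, h, sq_nonneg]
      have hje : (0:ℝ) ≤ (j:ℝ) * e := by positivity
      calc (∫ s in Ioc 0 M₁, Δ e (s - (j:ℝ) * e) ^ 2)
          ≤ ∫ s in Ioc 0 M₁, q (s - (j:ℝ) * e) := by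
            apply setIntegral_mono_on (hshift j)
              ((hqint.comp_sub_right _).integrableOn) measurableSet_Ioc
            intro s hs
            by_cases h : s - (j:ℝ) * e ∈ Icc (0:ℝ) M₁
            · rw [hqdef, indicator_of_mem h]
            · have hlt : s - (j:ℝ) * e < 0 := by
                rcases hs with ⟨_, hs2⟩
                by_contra hge
                push_neg at hge
                exact h ⟨hge, by linarith⟩
              rw [hqdef, indicator_of_notMem h, hΔ0 e he0 _ hlt]
              norm_num
        _ ≤ ∫ s, q (s - (j:ℝ) * e) := by
            apply setIntegral_le_integral (hqint.comp_sub_right _)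
            filter_upwards with u using hq0 _
        _ = ∫ u, q u := integral_sub_right_eq_self q _
        _ = ∫ u in Icc 0 M₁, Δ e u ^ 2 := integral_indicator measurableSet_Icc
        _ = ∫ u in Ioc 0 M₁, Δ e u ^ 2 := integral_Icc_eq_integral_Ioc
    -- put it together
    calc (∫ s in Ioc 0 M₁, D s ^ 2)
        ≤ ∫ s in Ioc 0 M₁, ((N:ℝ)+1) * ∑ j ∈ Finset.range (N+1),
            Δ e (s - (j:ℝ) * e) ^ 2 := by
          apply setIntegral_mono_on hDint _ measurableSet_Ioc hpt
          exact (integrable_finset_sum _ fun j _ => hshift j).const_mul _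
      _ = ((N:ℝ)+1) * ∑ j ∈ Finset.range (N+1),
            ∫ s in Ioc 0 M₁, Δ e (s - (j:ℝ) * e) ^ 2 := by
          rw [integral_const_mul, integral_finset_sum _ fun j _ => hshift j]
      _ ≤ ((N:ℝ)+1) * ∑ j ∈ Finset.range (N+1), ∫ s in Ioc 0 M₁, Δ e s ^ 2 := by
          apply mul_le_mul_of_nonneg_left _ (by positivity)
          exact Finset.sum_le_sum fun j _ => hshift_le j
      _ = ((N:ℝ)+1)^2 * ∫ s in Ioc 0 M₁, Δ e s ^ 2 := by
          rw [Finset.sum_const, Finset.card_range]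
          push_cast
          ring
  -- now integrate over e
  set h : ℝ → ℝ := fun e => ∫ s in Ioc 0 M₁, Δ e s ^ 2 with hhdef
  have hh_nonneg : ∀ e, 0 ≤ h e := fun e =>
    integral_nonneg fun s => sq_nonneg _
  have hh_bd : ∀ e, h e ≤ 4 * M₁ := by
    intro e
    calc h e ≤ ∫ _ in Ioc (0:ℝ) M₁, (4:ℝ) := by
          apply setIntegral_mono_on (hΔint e)
            (integrableOn_const measure_Ioc_lt_top.ne) measurableSet_Ioc
          intro s _; exact hΔbd e s
      _ = 4 * M₁ := by
          rw [setIntegral_const]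
          rw [measureReal_def, Real.volume_Ioc, smul_eq_mul]
          rw [ENNReal.toReal_ofReal (by linarith)]
          ring
  have hh_meas : StronglyMeasurable h := by
    have hQ : StronglyMeasurable fun p : ℝ × ℝ =>
        (F p.2 - F (p.2 - p.1) - G p.2 + G (p.2 - p.1)) ^ 2 := by
      apply Measurable.stronglyMeasurable
      have h2 : Measurable fun p : ℝ × ℝ => p.2 - p.1 :=
        measurable_snd.sub measurable_fst
      exact ((((hF.comp measurable_snd).sub (hF.comp h2)).sub
        (hG.comp measurable_snd)).add (hG.comp h2)).pow_const 2
    exact hQ.integral_prod_right' (ν := volume.restrict (Ioc 0 M₁))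
  have hh_int : IntegrableOn h (Ioc ε (2 * ε)) volume := by
    apply Measure.integrableOn_of_bounded measure_Ioc_lt_top.ne
      hh_meas.aestronglyMeasurable (M := 4 * M₁)
    filter_upwards with e
    rw [Real.norm_eq_abs, abs_of_nonneg (hh_nonneg e)]
    exact hh_bd e
  set I : ℝ := ∫ s in Ioc 0 M₁, D s ^ 2 with hIdef
  have hlow : I / ((N:ℝ)+1)^2 * (volume (Ioc ε (2*ε))).toReal ≤
      ∫ e in Ioc ε (2*ε), h e := by
    apply setIntegral_ge_of_const_le_real measurableSet_Ioc measure_Ioc_lt_top.ne _ hh_int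
    intro e he
    rw [div_le_iff₀ hNpos]
    calc I ≤ ((N:ℝ)+1)^2 * h e := key e he
      _ = h e * ((N:ℝ)+1)^2 := by ring
  have hvol2 : (volume (Ioc ε (2*ε))).toReal = ε := by
    rw [Real.volume_Ioc, ENNReal.toReal_ofReal (by linarith)]
    ring
  rw [hvol2] at hlow
  have hImain : I * ε ≤ ((N:ℝ)+1)^2 * ∫ e in Ioc ε (2*ε), h e := by
    rw [div_mul_eq_mul_div, div_le_iff₀ hNpos] at hlow
    calc I * ε ≤ (∫ e in Ioc ε (2*ε), h e) * ((N:ℝ)+1)^2 := hlow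
      _ = ((N:ℝ)+1)^2 * ∫ e in Ioc ε (2*ε), h e := by ring
  show I ≤ ((N:ℝ)+1)^2 / ε * ∫ e in Ioc ε (2*ε), h e
  rw [div_mul_eq_mul_div, le_div_iff₀ hε]
  linarith [hImain]
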